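/- Let A be a C*-algebra and let I, J, K be closed two-sided ideals of A. Then (I + K) ∩ (J + K) = (I ∩ J) + K; more generally, for closed two-sided ideals K, K₁, …, K_n of A one has ⋂_{j=1}^{n}(K_j + K) = (⋂_{j=1}^{n} K_j) + K. -/

import Mathlib

open scoped NNReal

section Aux

variable {A : Type*} [CStarAlgebra A] [PartialOrder A] [StarOrderedRing A]

/-- Approximate unit element inside an ideal: for `k ∈ K` and `ε > 0` there is `e ∈ K`
with `‖k - k * e‖₊ ≤ ε` and `‖x - x * e‖₊ ≤ ‖x‖₊` for all `x`. -/
private lemma cstar_ideal_exists_approx (K : TwoSidedIdeal A) {k : A} (hk : k ∈ K)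
    {ε : ℝ≥0} (hε : 0 < ε) :
    ∃ e ∈ K, ‖k - k * e‖₊ ≤ ε ∧ ∀ x : A, ‖x - x * e‖₊ ≤ ‖x‖₊ := by
  set b := star k * k with hbdef
  have hb : (0 : A) ≤ b := star_mul_self_nonneg k
  have hbK : b ∈ K := K.mul_mem_left _ _ hk
  set δ : ℝ≥0 := 4 * ε ^ 2 with hδdef
  have hδ : 0 < δ := by positivity
  set f : ℝ≥0 → ℝ≥0 := fun t => t / (t + δ) with hfdef
  have hfc : Continuous f := by fun_prop (disch := intro _; positivity)
  have hf1 : ∀ t, f t ≤ 1 := fun t => by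
    rw [hfdef]
    exact (div_le_one (by positivity)).mpr le_self_add
  set e := cfc f b with hedef
  have he0 : (0 : A) ≤ e := cfc_nonneg_of_predicate
  have hmul : b * e = cfc (fun t => t * f t) b := by
    rw [cfc_mul _ _ b (continuousOn_id' _) hfc.continuousOn, cfc_id' ℝ≥0 b]
  have hsub : cfc (fun t => t - t * f t) b = b - b * e := by
    rw [cfc_tsub _ _ b (fun t _ => mul_le_of_le_one_right zero_le (hf1 t)) hb
      (continuousOn_id' _) ((continuous_id.mul hfc).continuousOn), cfc_id' ℝ≥0 b, hmul]
  have hptwise : ∀ t : ℝ≥0, δ * f t = t - t * f t := by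
    intro t
    have h0 : t + δ ≠ 0 := by positivity
    have hsum : δ * f t + t * f t = t := by
      show δ * (t / (t + δ)) + t * (t / (t + δ)) = t
      rw [← add_mul, add_comm δ t, mul_comm, div_mul_cancel₀ _ h0]
    exact eq_tsub_of_add_eq hsum
  have hKe : e ∈ K := by
    have key : δ • e = b - b * e := by
      rw [hedef, ← cfc_const_mul δ f b hfc.continuousOn, ← hsub]
      exact cfc_congr fun t _ => hptwise t
    have : e = δ⁻¹ • (b - b * e) := by
      rw [← key, smul_smul, inv_mul_cancel₀ hδ.ne', one_smul]
    rw [this, NNReal.smul_def, Algebra.smul_def]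
    exact K.mul_mem_left _ _ (K.sub_mem hbK (K.mul_mem_right _ _ hbK))
  have hue : (1 : A) - e = cfc (fun t => 1 - f t) b := by
    rw [cfc_tsub (fun _ => 1) f b (fun t _ => hf1 t) hb continuousOn_const hfc.continuousOn,
      cfc_const_one ℝ≥0 b, hedef]
  have hunorm : ‖(1 : A) - e‖₊ ≤ 1 := by
    rw [hue]
    exact nnnorm_cfc_nnreal_le fun t _ => tsub_le_self
  have hu : ∀ x : A, x - x * e = x * (1 - e) := fun x => by rw [mul_sub, mul_one]
  have hcontr : ∀ x : A, ‖x - x * e‖₊ ≤ ‖x‖₊ := by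
    intro x
    rw [hu x]
    exact (nnnorm_mul_le _ _).trans (mul_le_of_le_one_right zero_le hunorm)
  refine ⟨e, hKe, ?_, hcontr⟩
  have h1e0 : (0 : A) ≤ 1 - e := hue ▸ cfc_nonneg_of_predicate
  have h1esa : star ((1 : A) - e) = 1 - e := (IsSelfAdjoint.of_nonneg h1e0).star_eq
  have h1c : ContinuousOn (fun t : ℝ≥0 => 1 - f t) (spectrum ℝ≥0 b) :=
    (continuous_const.sub hfc).continuousOn
  have hq : star (k - k * e) * (k - k * e) = cfc (fun t => (1 - f t) * (t * (1 - f t))) b := by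
    have hrhs : cfc (fun t : ℝ≥0 => (1 - f t) * (t * (1 - f t))) b
        = ((1 : A) - e) * (b * ((1 : A) - e)) := by
      rw [cfc_mul (fun t : ℝ≥0 => 1 - f t) (fun t : ℝ≥0 => t * (1 - f t)) b h1c
          ((continuous_id.mul (continuous_const.sub hfc)).continuousOn),
        cfc_mul (fun t : ℝ≥0 => t) (fun t : ℝ≥0 => 1 - f t) b (continuousOn_id' _) h1c,
        cfc_id' ℝ≥0 b, ← hue]
    rw [hu k, star_mul, h1esa, hrhs, hbdef]
    noncomm_ring
  have hbound : ‖k - k * e‖₊ ^ 2 ≤ ε ^ 2 := by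
    rw [sq, ← CStarRing.nnnorm_star_mul_self, hq]
    refine nnnorm_cfc_nnreal_le fun t _ => ?_
    have h1f : 1 - f t = δ / (t + δ) := by
      rw [hfdef]
      have h0 : t + δ ≠ 0 := by positivity
      rw [eq_div_iff h0, tsub_mul, one_mul, div_mul_cancel₀ _ h0, add_tsub_cancel_left]
    rw [h1f]
    rw [← NNReal.coe_le_coe]
    push_cast
    have ht0 : (0:ℝ) ≤ t := t.coe_nonneg
    have hδ0 : (0:ℝ) < δ := hδ
    have hδε : (δ : ℝ) = 4 * (ε:ℝ)^2 := by rw [hδdef]; push_cast; ring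
    have hkey : (δ:ℝ)/((t:ℝ)+δ) * ((t:ℝ) * ((δ:ℝ)/((t:ℝ)+δ)))
        = (t:ℝ) * (δ:ℝ)^2 / (((t:ℝ)+δ)^2) := by
      field_simp
    have hε2 : (ε:ℝ)^2 = (δ:ℝ)/4 := by rw [hδε]; ring
    rw [hkey, hε2, div_le_div_iff₀ (by positivity) (by norm_num)]
    nlinarith [mul_nonneg hδ0.le (sq_nonneg ((t:ℝ) - δ))]
  by_contra hlt
  push_neg at hlt
  exact absurd hbound (not_le.mpr (by gcongr))

/-- For `i ∈ I` and `k ∈ K`, there is `c ∈ I ⊓ K` with `‖i - c‖₊ ≤ ‖i + k‖₊ + ε`. -/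
private lemma cstar_ideal_approx_inter (I K : TwoSidedIdeal A) {i k : A} (hi : i ∈ I)
    (hk : k ∈ K) {ε : ℝ≥0} (hε : 0 < ε) :
    ∃ c ∈ I ⊓ K, ‖i - c‖₊ ≤ ‖i + k‖₊ + ε := by
  obtain ⟨e, heK, hke, hcontr⟩ := cstar_ideal_exists_approx K hk hε
  refine ⟨i * e, ⟨I.mul_mem_right _ _ hi, K.mul_mem_left _ _ heK⟩, ?_⟩
  have hrw : i - i * e = ((i + k) - (i + k) * e) - (k - k * e) := by noncomm_ring
  rw [hrw]
  exact (nnnorm_sub_le _ _).trans (add_le_add (hcontr _) hke)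

/-- The sup (sum) of two closed two-sided ideals in a C⋆-algebra is closed. -/
private lemma cstar_ideal_sup_isClosed {I K : TwoSidedIdeal A} (hI : IsClosed (I : Set A))
    (hK : IsClosed (K : Set A)) : IsClosed ((I ⊔ K : TwoSidedIdeal A) : Set A) := by
  refine isClosed_of_closure_subset fun x hx => ?_
  have hsel : ∀ n : ℕ, ∃ p : A × A, p.1 ∈ I ∧ p.2 ∈ K ∧ ‖x - (p.1 + p.2)‖ < (2:ℝ)⁻¹ ^ n := by
    intro n
    obtain ⟨y, hy, hxy⟩ := Metric.mem_closure_iff.mp hx ((2:ℝ)⁻¹ ^ n) (by positivity)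
    obtain ⟨a, ha, c, hc, hac⟩ := TwoSidedIdeal.mem_sup.mp hy
    exact ⟨(a, c), ha, hc, by rw [hac, ← dist_eq_norm]; exact hxy⟩
  choose p hp1 hp2 hp3 using hsel
  set i : ℕ → A := fun n => (p n).1 with hidef
  set k : ℕ → A := fun n => (p n).2 with hkdef
  have hc' : ∀ n : ℕ, ∃ c ∈ I ⊓ K,
      ‖(i (n+1) - i n) - c‖₊ ≤ ‖(i (n+1) - i n) + (k (n+1) - k n)‖₊ + (2:ℝ≥0)⁻¹ ^ n :=
    fun n => cstar_ideal_approx_inter I K (I.sub_mem (hp1 _) (hp1 _))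
      (K.sub_mem (hp2 _) (hp2 _)) (by positivity)
  choose c hcm hcb using hc'
  have hbnd : ∀ n, ‖(i (n+1) - i n) - c n‖ ≤ 3 * (2:ℝ)⁻¹ ^ n := by
    intro n
    have h1 : (i (n+1) - i n) + (k (n+1) - k n)
        = (x - (i n + k n)) - (x - (i (n+1) + k (n+1))) := by abel
    have h2 : ‖(i (n+1) - i n) + (k (n+1) - k n)‖ ≤ (2:ℝ)⁻¹ ^ n + (2:ℝ)⁻¹ ^ (n+1) := by
      rw [h1]
      exact (norm_sub_le _ _).trans (add_le_add (hp3 n).le (hp3 (n+1)).le)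
    have h3 : ‖(i (n+1) - i n) - c n‖
        ≤ ‖(i (n+1) - i n) + (k (n+1) - k n)‖ + (2:ℝ)⁻¹ ^ n := by
      exact_mod_cast hcb n
    have hpow : (2:ℝ)⁻¹ ^ (n+1) ≤ (2:ℝ)⁻¹ ^ n :=
      pow_le_pow_of_le_one (by norm_num) (by norm_num) (Nat.le_succ n)
    nlinarith [h2, h3, hpow]
  set s : ℕ → A := fun n => ∑ m ∈ Finset.range n, c m with hsdef
  set i' : ℕ → A := fun n => i n - s n with hi'def
  have hcauchy : CauchySeq i' := by
    refine cauchySeq_of_le_geometric 2⁻¹ 3 (by norm_num) fun n => ?_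
    rw [dist_eq_norm']
    have : i' (n+1) - i' n = (i (n+1) - i n) - c n := by
      simp only [hi'def, hsdef, Finset.sum_range_succ]
      abel
    rw [this]
    exact hbnd n
  obtain ⟨L, hL⟩ := cauchySeq_tendsto_of_complete hcauchy
  have hsmem : ∀ n, s n ∈ K := fun n =>
    sum_mem fun m _ => (hcm m).2
  have hsmemI : ∀ n, s n ∈ I := fun n =>
    sum_mem fun m _ => (hcm m).1
  have hLI : L ∈ I := hI.mem_of_tendsto hL
    (Filter.Eventually.of_forall fun n => I.sub_mem (hp1 n) (hsmemI n))
  have hik : Filter.Tendsto (fun n => i n + k n) Filter.atTop (nhds x) := by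
    have h0 : Filter.Tendsto (fun n => x - (i n + k n)) Filter.atTop (nhds 0) :=
      squeeze_zero_norm (fun n => (hp3 n).le)
        (tendsto_pow_atTop_nhds_zero_of_lt_one (by norm_num) (by norm_num))
    have h1 : Filter.Tendsto (fun n => x - (x - (i n + k n))) Filter.atTop (nhds (x - 0)) :=
      tendsto_const_nhds.sub h0
    rw [sub_zero] at h1
    exact h1.congr fun n => by abel
  have hxK : x - L ∈ K := by
    have htend : Filter.Tendsto (fun n => (i n + k n) - i' n) Filter.atTop (nhds (x - L)) :=
      hik.sub hL
    refine hK.mem_of_tendsto htend (Filter.Eventually.of_forall fun n => ?_)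
    have : (i n + k n) - i' n = k n + s n := by simp only [hi'def]; abel
    rw [this]
    exact K.add_mem (hp2 n) (hsmem n)
  exact TwoSidedIdeal.mem_sup.mpr ⟨L, hLI, x - L, hxK, by abel⟩

private lemma cstar_ideal_coe_inf (I J : TwoSidedIdeal A) :
    ((I ⊓ J : TwoSidedIdeal A) : Set A) = (I : Set A) ∩ (J : Set A) :=
  Set.ext fun _ => Iff.rfl

/-- Key lemma: `I ⊓ (J ⊔ K) ≤ (I ⊓ J) ⊔ K` for closed ideals. -/
private lemma cstar_ideal_key {I J K : TwoSidedIdeal A} (hI : IsClosed (I : Set A))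
    (hJ : IsClosed (J : Set A)) (hK : IsClosed (K : Set A)) {x : A} (hxI : x ∈ I)
    (hx : x ∈ J ⊔ K) : x ∈ (I ⊓ J) ⊔ K := by
  have hIJ : IsClosed ((I ⊓ J : TwoSidedIdeal A) : Set A) := by
    rw [cstar_ideal_coe_inf]; exact hI.inter hJ
  have hclosed : IsClosed (((I ⊓ J) ⊔ K : TwoSidedIdeal A) : Set A) :=
    cstar_ideal_sup_isClosed hIJ hK
  have hmem : x ∈ closure ((((I ⊓ J) ⊔ K : TwoSidedIdeal A)) : Set A) := by
    rw [Metric.mem_closure_iff]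
    intro ε hε
    obtain ⟨j, hj, k, hk, hx_eq⟩ := TwoSidedIdeal.mem_sup.mp hx
    have hε2 : (0 : ℝ≥0) < (ε / 2).toNNReal := by
      rw [Real.toNNReal_pos]; positivity
    obtain ⟨e, heJ, hje, -⟩ := cstar_ideal_exists_approx J hj hε2
    refine ⟨x * e + (k - k * e), TwoSidedIdeal.mem_sup.mpr
      ⟨x * e, ⟨I.mul_mem_right _ _ hxI, J.mul_mem_left _ _ heJ⟩,
        k - k * e, K.sub_mem hk (K.mul_mem_right _ _ hk), rfl⟩, ?_⟩
    rw [dist_eq_norm]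
    have hrw : x - (x * e + (k - k * e)) = j - j * e := by rw [← hx_eq]; noncomm_ring
    rw [hrw]
    have : ‖j - j * e‖ ≤ ((ε / 2).toNNReal : ℝ) := by
      rw [← coe_nnnorm]
      exact_mod_cast hje
    calc ‖j - j * e‖ ≤ ((ε / 2).toNNReal : ℝ) := this
      _ = ε / 2 := Real.coe_toNNReal _ (by positivity)
      _ < ε := by linarith
  exact hclosed.closure_subset hmem

private lemma cstar_ideal_distrib {I J K : TwoSidedIdeal A} (hI : IsClosed (I : Set A))
    (hJ : IsClosed (J : Set A)) (hK : IsClosed (K : Set A)) :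
    (I ⊔ K) ⊓ (J ⊔ K) = (I ⊓ J) ⊔ K := by
  refine le_antisymm ?_ ?_
  · intro x hx
    obtain ⟨hx1, hx2⟩ := hx
    obtain ⟨a, ha, b, hb, hab⟩ := TwoSidedIdeal.mem_sup.mp hx1
    have haJK : a ∈ J ⊔ K := by
      have : a = x - b := by rw [← hab]; abel
      rw [this]
      exact TwoSidedIdeal.sub_mem _ hx2 (TwoSidedIdeal.mem_sup_right hb)
    have ha' : a ∈ (I ⊓ J) ⊔ K := cstar_ideal_key hI hJ hK ha haJK
    have : x = a + b := hab.symm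
    rw [this]
    exact TwoSidedIdeal.add_mem _ ha' (TwoSidedIdeal.mem_sup_right hb)
  · exact sup_le (le_inf (le_trans inf_le_left le_sup_left)
      (le_trans inf_le_right le_sup_left)) (le_inf le_sup_right le_sup_right)

private lemma fin_iInf_succ {n : ℕ} {α : Type*} [CompleteLattice α] (f : Fin (n+1) → α) :
    ⨅ j, f j = f 0 ⊓ ⨅ j : Fin n, f j.succ := by
  refine le_antisymm (le_inf (iInf_le _ 0) (le_iInf fun j => iInf_le _ j.succ))
    (le_iInf fun j => ?_)
  induction j using Fin.cases with
  | zero => exact inf_le_left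
  | succ i => exact inf_le_right.trans (iInf_le _ i)

private lemma cstar_ideal_iInf_isClosed {n : ℕ} (𝒦 : Fin n → TwoSidedIdeal A)
    (h : ∀ j, IsClosed (𝒦 j : Set A)) : IsClosed ((⨅ j, 𝒦 j : TwoSidedIdeal A) : Set A) := by
  have : ((⨅ j, 𝒦 j : TwoSidedIdeal A) : Set A) = ⋂ j, (𝒦 j : Set A) := by
    ext x
    simpa using (TwoSidedIdeal.mem_iInf (I := 𝒦) (x := x))
  rw [this]
  exact isClosed_iInter h

private lemma cstar_ideal_distrib_iInf (n : ℕ) (K : TwoSidedIdeal A)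
    (𝒦 : Fin n → TwoSidedIdeal A) (hK : IsClosed (K : Set A))
    (h𝒦 : ∀ j, IsClosed (𝒦 j : Set A)) :
    (⨅ j, (𝒦 j ⊔ K)) = (⨅ j, 𝒦 j) ⊔ K := by
  induction n with
  | zero => simp [iInf_of_isEmpty, top_sup_eq]
  | succ n ih =>
    rw [fin_iInf_succ (fun j => 𝒦 j ⊔ K), fin_iInf_succ 𝒦,
      ih (fun j => 𝒦 j.succ) (fun j => h𝒦 j.succ),
      cstar_ideal_distrib (h𝒦 0) (cstar_ideal_iInf_isClosed _ fun j => h𝒦 j.succ) hK]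

end Aux

/-- In a C*-algebra, closed two-sided ideals satisfy
`(I + K) ∩ (J + K) = (I ∩ J) + K`, and more generally, for closed two-sided ideals
`K, K₁, …, K_n`, `⋂_{j=1}^n (K_j + K) = (⋂_{j=1}^n K_j) + K`
(sums of two-sided ideals being their lattice sups). -/
theorem cstar_closed_ideals_distributive
    {A : Type*} [NormedRing A] [StarRing A] [CStarRing A] [CompleteSpace A]
    [NormedAlgebra ℂ A] [StarModule ℂ A] :
    (∀ I J K : TwoSidedIdeal A,
      IsClosed (I : Set A) → IsClosed (J : Set A) → IsClosed (K : Set A) →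
      (I ⊔ K) ⊓ (J ⊔ K) = (I ⊓ J) ⊔ K) ∧
    (∀ (n : ℕ) (K : TwoSidedIdeal A) (𝒦 : Fin n → TwoSidedIdeal A),
      IsClosed (K : Set A) → (∀ j, IsClosed (𝒦 j : Set A)) →
      (⨅ j, (𝒦 j ⊔ K)) = (⨅ j, 𝒦 j) ⊔ K) := by
  letI : CStarAlgebra A := {}
  letI : PartialOrder A := CStarAlgebra.spectralOrder A
  letI : StarOrderedRing A := CStarAlgebra.spectralOrderedRing A
  exact ⟨fun I J K hI hJ hK => cstar_ideal_distrib hI hJ hK,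
    fun n K 𝒦 hK h𝒦 => cstar_ideal_distrib_iInf n K 𝒦 hK h𝒦⟩
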